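/- Under exact EGPO updates with learning rate η satisfying 0 < η ≤ 1/(β+3), for every T ≥ 1 one has KL(π^{(T)} ‖ π*_β) ≤ (2 / (ηβ)) · KL(π*_β ‖ π^{(0)}) · (1 − ηβ)^T. -/

import Mathlib

set_option maxHeartbeats 1000000

open Real

/-- Tabular softmax policy. -/
noncomputable def softmax {Y : Type*} [Fintype Y] (θ : Y → ℝ) : Y → ℝ :=
  fun y => Real.exp (θ y) / ∑ y', Real.exp (θ y')

/-- Kullback–Leibler divergence between distributions on a finite set. -/
noncomputable def KLdiv {Y : Type*} [Fintype Y] (p q : Y → ℝ) : ℝ :=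
  ∑ y, p y * Real.log (p y / q y)

/-- `(P π)(y) = ∑ y' P(y, y') π(y')`. -/
noncomputable def matVec {Y : Type*} [Fintype Y] (P : Y → Y → ℝ) (p : Y → ℝ) : Y → ℝ :=
  fun y => ∑ y', P y y' * p y'

open Finset

/- ## Auxiliary lemmas -/

lemma Zpos (Y : Type*) [Fintype Y] [Nonempty Y] (θ : Y → ℝ) : 0 < ∑ y, Real.exp (θ y) :=
  Finset.sum_pos (fun y _ => Real.exp_pos _) univ_nonempty

lemma softmax_pos (Y : Type*) [Fintype Y] [Nonempty Y] (θ : Y → ℝ) (y : Y) :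
    0 < softmax θ y :=
  div_pos (Real.exp_pos _) (Zpos Y θ)

lemma softmax_sum (Y : Type*) [Fintype Y] [Nonempty Y] (θ : Y → ℝ) :
    ∑ y, softmax θ y = 1 := by
  simp only [softmax]
  rw [← Finset.sum_div]
  exact div_self (ne_of_gt (Zpos Y θ))

lemma log_softmax (Y : Type*) [Fintype Y] [Nonempty Y] (θ : Y → ℝ) (y : Y) :
    Real.log (softmax θ y) = θ y - Real.log (∑ y', Real.exp (θ y')) := by
  rw [softmax, Real.log_div (Real.exp_ne_zero _) (ne_of_gt (Zpos Y θ)), Real.log_exp]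

/-- KL divergence between softmaxes, explicit formula. -/
lemma KLF (Y : Type*) [Fintype Y] [Nonempty Y] (x y : Y → ℝ) :
    KLdiv (softmax x) (softmax y)
      = (∑ z, softmax x z * (x z - y z))
        - Real.log (∑ z, Real.exp (x z)) + Real.log (∑ z, Real.exp (y z)) := by
  have h : ∀ z, softmax x z * Real.log (softmax x z / softmax y z)
      = softmax x z * (x z - y z)
        - softmax x z * (Real.log (∑ w, Real.exp (x w)) - Real.log (∑ w, Real.exp (y w))) := by
    intro z
    rw [Real.log_div (ne_of_gt (softmax_pos Y x z)) (ne_of_gt (softmax_pos Y y z)),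
      log_softmax, log_softmax]
    ring
  rw [KLdiv]
  simp only [h]
  rw [Finset.sum_sub_distrib, ← Finset.sum_mul, softmax_sum]
  ring

lemma poly6 (u : ℝ) (hu : 0 ≤ u) :
    0 ≤ 27*u^6 - 2*u^5 - 31*u^4 - 60*u^3 + 39*u^2 + 26*u + 13 := by
  nlinarith [sq_nonneg (u-1), sq_nonneg (u^2-1), sq_nonneg (u^2-u), sq_nonneg (u^3-u^2),
    sq_nonneg (u^3-u), sq_nonneg (u^3-1), sq_nonneg (u^3 - u^2 - u + 1), sq_nonneg u,
    sq_nonneg (u^3 - (6/5)*u^2), sq_nonneg (u^2 - (6/5)*u), mul_nonneg hu (sq_nonneg (u^2-u)),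
    mul_nonneg hu (sq_nonneg (u^2-1)), mul_nonneg hu (sq_nonneg (u-1)),
    mul_nonneg (mul_nonneg hu hu) (sq_nonneg (u^2-u)),
    mul_nonneg (mul_nonneg hu hu) (sq_nonneg (u-1)),
    mul_nonneg (mul_nonneg (mul_nonneg hu hu) hu) (sq_nonneg (u-1))]

/-- pointwise Pinsker-type bound, constant 14/5. -/
lemma pointwiseKL (x y : ℝ) (hx : 0 < x) (hy : 0 < y) :
    15*(x-y)^2 ≤ 7*(x*Real.log (x/y) - x + y)*(2*x+4*y) := by
  set t : ℝ := x / y with ht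
  have htpos : 0 < t := div_pos hx hy
  set u : ℝ := t ^ ((1:ℝ)/4) with hu
  have hupos : 0 < u := Real.rpow_pos_of_pos htpos _
  have hu4 : u ^ (4:ℕ) = t := by
    rw [hu, ← Real.rpow_natCast (t ^ ((1:ℝ)/4)) 4, ← Real.rpow_mul (le_of_lt htpos)]
    norm_num
  have hlogu : Real.log t = 4 * Real.log u := by
    rw [hu, Real.log_rpow htpos]; ring
  have hlogub : 1 - 1/u ≤ Real.log u := by
    have := Real.log_le_sub_one_of_pos (show (0:ℝ) < 1/u by positivity)
    rw [Real.log_div one_ne_zero (ne_of_gt hupos), Real.log_one] at this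
    linarith
  have hx4 : x = y * u^(4:ℕ) := by rw [hu4, ht]; field_simp
  have hp := poly6 u (le_of_lt hupos)
  have hlog : x * Real.log (x/y) ≥ 4*x - 4*x/u := by
    rw [← ht, hlogu]
    have h1 : 4*x - 4*x/u = x * (4 * (1 - 1/u)) := by field_simp
    rw [h1]
    apply mul_le_mul_of_nonneg_left _ (le_of_lt hx)
    linarith
  have h4xu : 4*x/u = 4*y*u^3 := by rw [hx4]; field_simp
  have hkey : 4*x - 4*x/u - x + y = y*(3*u^4-4*u^3+1) := by
    rw [h4xu, hx4]; ring
  have hphi : y*(3*u^4 - 4*u^3 + 1) ≤ x*Real.log (x/y) - x + y := by linarith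
  have h2x4y : (0:ℝ) ≤ 2*x + 4*y := by linarith
  have h15 : 15*(u^4-1)^2 ≤ 7*(3*u^4-4*u^3+1)*(2*u^4+4) := by
    nlinarith [mul_nonneg (sq_nonneg (u-1)) hp]
  calc 15*(x-y)^2 = y^2 * (15*(u^4-1)^2) := by rw [hx4]; ring
    _ ≤ y^2 * (7*(3*u^4-4*u^3+1)*(2*u^4+4)) :=
        mul_le_mul_of_nonneg_left h15 (sq_nonneg y)
    _ = 7*(y*(3*u^4-4*u^3+1))*(2*x+4*y) := by rw [hx4]; ring
    _ ≤ 7*(x*Real.log (x/y) - x + y)*(2*x+4*y) := by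
        apply mul_le_mul_of_nonneg_right _ h2x4y
        linarith

/-- Weak Pinsker inequality with constant 14/5. -/
lemma pinsker (Y : Type*) [Fintype Y] (p q : Y → ℝ)
    (hp : ∀ y, 0 < p y) (hq : ∀ y, 0 < q y)
    (hp1 : ∑ y, p y = 1) (hq1 : ∑ y, q y = 1) :
    (∑ y, |p y - q y|)^2 ≤ (14/5) * KLdiv p q := by
  have hKL : KLdiv p q = ∑ y, (p y * Real.log (p y / q y) - p y + q y) := by
    rw [KLdiv]
    rw [Finset.sum_add_distrib, Finset.sum_sub_distrib, hp1, hq1]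
    ring
  have hc : ∀ y : Y, (0:ℝ) < 2 * p y + 4 * q y := fun y => by
    have := hp y; have := hq y; linarith
  have hCS := Finset.sum_mul_sq_le_sq_mul_sq Finset.univ
    (fun y => |p y - q y| / Real.sqrt (2 * p y + 4 * q y))
    (fun y => Real.sqrt (2 * p y + 4 * q y))
  have hfg : ∀ y : Y, |p y - q y| / Real.sqrt (2 * p y + 4 * q y) * Real.sqrt (2 * p y + 4 * q y)
      = |p y - q y| := fun y =>
    div_mul_cancel₀ _ (ne_of_gt (Real.sqrt_pos.mpr (hc y)))
  have hf2 : ∀ y : Y, (|p y - q y| / Real.sqrt (2 * p y + 4 * q y))^2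
      = (p y - q y)^2 / (2 * p y + 4 * q y) := fun y => by
    rw [div_pow, sq_abs, Real.sq_sqrt (le_of_lt (hc y))]
  have hg2 : ∀ y : Y, (Real.sqrt (2 * p y + 4 * q y))^2 = 2 * p y + 4 * q y := fun y =>
    Real.sq_sqrt (le_of_lt (hc y))
  simp only [hfg, hf2, hg2] at hCS
  have hsum6 : ∑ y, (2 * p y + 4 * q y) = 6 := by
    rw [Finset.sum_add_distrib, ← Finset.mul_sum, ← Finset.mul_sum, hp1, hq1]; norm_num
  rw [hsum6] at hCS
  have hterm : ∀ y : Y, (p y - q y)^2 / (2 * p y + 4 * q y)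
      ≤ (7/15) * (p y * Real.log (p y / q y) - p y + q y) := by
    intro y
    rw [div_le_iff₀ (hc y)]
    nlinarith [pointwiseKL (p y) (q y) (hp y) (hq y)]
  have hsumterm : ∑ y, (p y - q y)^2 / (2 * p y + 4 * q y)
      ≤ (7/15) * ∑ y, (p y * Real.log (p y / q y) - p y + q y) := by
    rw [Finset.mul_sum]
    exact Finset.sum_le_sum fun y _ => hterm y
  rw [hKL]
  calc (∑ y, |p y - q y|)^2 ≤ (∑ y, (p y - q y)^2 / (2 * p y + 4 * q y)) * 6 := hCS
    _ ≤ ((7/15) * ∑ y, (p y * Real.log (p y / q y) - p y + q y)) * 6 := by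
        apply mul_le_mul_of_nonneg_right hsumterm; norm_num
    _ = (14/5) * ∑ y, (p y * Real.log (p y / q y) - p y + q y) := by ring

lemma PZbound {Y : Type*} [Fintype Y] (P : Y → Y → ℝ)
    (hP0 : ∀ y y', 0 ≤ P y y') (hP1 : ∀ y y', P y y' ≤ 1)
    (z : Y → ℝ) (hz : ∑ y, z y = 0) (y : Y) :
    |∑ y', P y y' * z y'| ≤ (∑ y', |z y'|) / 2 := by
  have h : ∑ y', P y y' * z y' = ∑ y', (P y y' - 1/2) * z y' := by
    simp only [sub_mul, Finset.sum_sub_distrib]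
    have : ∑ y', (1:ℝ)/2 * z y' = 0 := by rw [← Finset.mul_sum, hz]; ring
    rw [this]; ring
  rw [h]
  calc |∑ y', (P y y' - 1/2) * z y'| ≤ ∑ y', |(P y y' - 1/2) * z y'| :=
        Finset.abs_sum_le_sum_abs _ _
    _ ≤ ∑ y', (1/2) * |z y'| := by
        apply Finset.sum_le_sum
        intro i _
        rw [abs_mul]
        apply mul_le_mul_of_nonneg_right _ (abs_nonneg _)
        rw [abs_le]
        constructor
        · linarith [hP0 y i]
        · linarith [hP1 y i]
    _ = (∑ y', |z y'|) / 2 := by rw [← Finset.mul_sum]; ring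

lemma skewZero {Y : Type*} [Fintype Y] (P : Y → Y → ℝ)
    (hPsum : ∀ y y', P y y' + P y' y = 1)
    (z : Y → ℝ) (hz : ∑ y, z y = 0) :
    ∑ y, z y * (∑ y', P y y' * z y') = 0 := by
  have e1 : ∑ y, z y * (∑ y', P y y' * z y') = ∑ y, ∑ y', P y y' * (z y * z y') :=
    Finset.sum_congr rfl fun y _ => by
      rw [Finset.mul_sum]; exact Finset.sum_congr rfl fun y' _ => by ring
  have e2 : ∑ y, ∑ y', P y y' * (z y * z y') = ∑ y, ∑ y', P y' y * (z y * z y') := by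
    rw [Finset.sum_comm]
    exact Finset.sum_congr rfl fun y _ => Finset.sum_congr rfl fun y' _ => by ring
  have e3 : ∑ y, ∑ y', (P y y' + P y' y) * (z y * z y') = 0 := by
    have h1 : ∀ y y', (P y y' + P y' y) * (z y * z y') = z y * z y' := by
      intro y y'; rw [hPsum]; ring
    simp only [h1]
    have h2 : ∀ y : Y, ∑ y', z y * z y' = 0 := fun y => by rw [← Finset.mul_sum, hz]; ring
    simp only [h2, Finset.sum_const_zero]
  have e4 : ∑ y, ∑ y', (P y y' + P y' y) * (z y * z y')
      = (∑ y, ∑ y', P y y' * (z y * z y')) + ∑ y, ∑ y', P y' y * (z y * z y') := by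
    rw [← Finset.sum_add_distrib]
    exact Finset.sum_congr rfl fun y _ => by
      rw [← Finset.sum_add_distrib]
      exact Finset.sum_congr rfl fun y' _ => by ring
  linarith [e1, e2, e3, e4]

lemma exp23 : Real.exp (2/3) ≤ 293/150 := by
  have h1 : Real.exp (2/3) ^ (3:ℕ) = Real.exp 2 := by
    rw [← Real.exp_nat_mul]; norm_num
  have h2 : Real.exp 2 = Real.exp 1 ^ (2:ℕ) := by
    rw [← Real.exp_nat_mul]; norm_num
  have h3 : Real.exp 1 < 2.7182818286 := Real.exp_one_lt_d9
  have h4 : Real.exp 2 < 7.3890561 := by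
    rw [h2]
    nlinarith [Real.exp_pos 1]
  have h5 : (0:ℝ) < Real.exp (2/3) := Real.exp_pos _
  nlinarith [h1, h4, h5, sq_nonneg (Real.exp (2/3) - 293/150), sq_nonneg (Real.exp (2/3) + 293/150)]

lemma expChord (τ : ℝ) (h0 : 0 ≤ τ) (h1 : τ ≤ 2/3) :
    Real.exp τ ≤ 1 + (143/100) * τ := by
  have key := convexOn_exp.2 (Set.mem_univ (0:ℝ)) (Set.mem_univ (2/3:ℝ))
    (show (0:ℝ) ≤ 1 - (3/2)*τ by linarith)
    (show (0:ℝ) ≤ (3/2)*τ by linarith)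
    (show (1 - (3/2)*τ) + (3/2)*τ = 1 by ring)
  simp only [smul_eq_mul, mul_zero, zero_add, Real.exp_zero, mul_one] at key
  have e23 := exp23
  have hτeq : (3/2)*τ*(2/3) = τ := by ring
  rw [hτeq] at key
  nlinarith [key]

lemma softmax_ratio (Y : Type*) [Fintype Y] [Nonempty Y] (x x' : Y → ℝ) (τ : ℝ) (hτ : 0 ≤ τ)
    (hd : ∀ y, |x y - x' y| ≤ τ/2) (y : Y) :
    softmax x y ≤ Real.exp τ * softmax x' y := by
  have hnum : Real.exp (x y) ≤ Real.exp (τ/2) * Real.exp (x' y) := by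
    rw [← Real.exp_add]
    apply Real.exp_le_exp.mpr
    have := abs_le.mp (hd y)
    linarith [this.2]
  have hden : Real.exp (-(τ/2)) * ∑ z, Real.exp (x' z) ≤ ∑ z, Real.exp (x z) := by
    rw [Finset.mul_sum]
    apply Finset.sum_le_sum
    intro z _
    rw [← Real.exp_add]
    apply Real.exp_le_exp.mpr
    have := abs_le.mp (hd z)
    linarith [this.1]
  have hdpos : 0 < Real.exp (-(τ/2)) * ∑ z, Real.exp (x' z) :=
    mul_pos (Real.exp_pos _) (Zpos Y x')
  have h1 : softmax x y ≤ (Real.exp (τ/2) * Real.exp (x' y))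
      / (Real.exp (-(τ/2)) * ∑ z, Real.exp (x' z)) := by
    apply div_le_div₀ (by positivity) hnum hdpos hden
  calc softmax x y ≤ _ := h1
    _ = Real.exp τ * softmax x' y := by
        rw [softmax]
        rw [Real.exp_neg]
        field_simp
        rw [sq, ← Real.exp_add, add_halves]

lemma softmax_absdiff (Y : Type*) [Fintype Y] [Nonempty Y] (x x' : Y → ℝ) (τ : ℝ) (hτ : 0 ≤ τ)
    (hd : ∀ y, |x y - x' y| ≤ τ/2) (y : Y) :
    |softmax x y - softmax x' y| ≤ (Real.exp τ - 1) * softmax x' y := by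
  have hup := softmax_ratio Y x x' τ hτ hd y
  have hd' : ∀ z, |x' z - x z| ≤ τ/2 := fun z => by rw [abs_sub_comm]; exact hd z
  have hdown := softmax_ratio Y x' x τ hτ hd' y
  have hpx : 0 < softmax x y := softmax_pos Y x y
  have hpx' : 0 < softmax x' y := softmax_pos Y x' y
  have hee : Real.exp τ * Real.exp (-τ) = 1 := by rw [← Real.exp_add]; simp
  have hsum2 : 2 ≤ Real.exp τ + Real.exp (-τ) := by
    nlinarith [sq_nonneg (Real.exp τ - Real.exp (-τ)), Real.exp_pos τ, Real.exp_pos (-τ)]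
  rw [abs_le]
  constructor
  · have h2 : Real.exp (-τ) * softmax x' y ≤ softmax x y := by
      have h3 := mul_le_mul_of_nonneg_left hdown (le_of_lt (Real.exp_pos (-τ)))
      rw [← mul_assoc] at h3
      rw [mul_comm (Real.exp (-τ)) (Real.exp τ), hee, one_mul] at h3
      linarith
    nlinarith [hsum2, hpx']
  · nlinarith [hup, hpx']

section Step
variable {Y : Type*} [Fintype Y] [Nonempty Y]

/-- One-step contraction for exact EGPO. -/
lemma egpo_step (P : Y → Y → ℝ)
    (hP0 : ∀ y y', 0 ≤ P y y') (hP1 : ∀ y y', P y y' ≤ 1)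
    (hPsum : ∀ y y', P y y' + P y' y = 1)
    (β η : ℝ) (hβ : 0 < β) (hη : 0 < η) (hη3 : η ≤ 1/3) (hηβ : η * β ≤ 1 - 3*η)
    (S A M B : Y → ℝ)
    (hM : ∀ y, M y = A y - η*β*(A y - S y)
        + η*(matVec P (softmax A) y - matVec P (softmax S) y))
    (hB : ∀ y, B y = A y - η*β*(A y - S y)
        + η*(matVec P (softmax M) y - matVec P (softmax S) y)) :
    KLdiv (softmax S) (softmax B) + (η*β/2) * KLdiv (softmax B) (softmax S)
      ≤ (1 - η*β) * KLdiv (softmax S) (softmax A) := by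
  -- distributions
  have hq1 := softmax_sum Y S
  have ha1 := softmax_sum Y A
  have hm1 := softmax_sum Y M
  have hb1 := softmax_sum Y B
  have hqpos := softmax_pos Y S
  have hapos := softmax_pos Y A
  have hmpos := softmax_pos Y M
  have hbpos := softmax_pos Y B
  obtain ⟨e, he⟩ : ∃ e : ℝ, η * β = e := ⟨_, rfl⟩
  simp only [he] at hM hB ⊢
  have hepos : 0 < e := he ▸ mul_pos hη hβ
  have he1 : e ≤ 1 - 3*η := he ▸ hηβ
  -- skew fact
  have hzsum : ∑ y, (softmax M y - softmax S y) = 0 := by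
    rw [Finset.sum_sub_distrib, hm1, hq1]; ring
  have hskew0 := skewZero P hPsum (fun y => softmax M y - softmax S y) hzsum
  have hlin : ∀ y : Y, (∑ y', P y y' * (softmax M y' - softmax S y'))
      = matVec P (softmax M) y - matVec P (softmax S) y := by
    intro y
    simp only [matVec, mul_sub, Finset.sum_sub_distrib]
  simp only [hlin] at hskew0
  -- hskew0 : ∑ y, (softmax M y - softmax S y) * (matVec P (softmax M) y - matVec P (softmax S) y) = 0
  -- atom expansions
  have hexpq : ∑ y, softmax S y * B y
      = (1-e) * (∑ y, softmax S y * A y) + e * (∑ y, softmax S y * S y)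
        + η * (∑ y, softmax S y * matVec P (softmax M) y)
        - η * (∑ y, softmax S y * matVec P (softmax S) y) := by
    have h : ∀ y : Y, softmax S y * B y
        = (1-e) * (softmax S y * A y) + e * (softmax S y * S y)
          + η * (softmax S y * matVec P (softmax M) y)
          - η * (softmax S y * matVec P (softmax S) y) := by
      intro y; rw [hB y]; ring
    rw [Finset.sum_congr rfl fun y _ => h y]
    rw [Finset.sum_sub_distrib, Finset.sum_add_distrib, Finset.sum_add_distrib,
      ← Finset.mul_sum, ← Finset.mul_sum, ← Finset.mul_sum, ← Finset.mul_sum]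
  have hexpmB : ∑ y, softmax M y * B y
      = (1-e) * (∑ y, softmax M y * A y) + e * (∑ y, softmax M y * S y)
        + η * (∑ y, softmax M y * matVec P (softmax M) y)
        - η * (∑ y, softmax M y * matVec P (softmax S) y) := by
    have h : ∀ y : Y, softmax M y * B y
        = (1-e) * (softmax M y * A y) + e * (softmax M y * S y)
          + η * (softmax M y * matVec P (softmax M) y)
          - η * (softmax M y * matVec P (softmax S) y) := by
      intro y; rw [hB y]; ring
    rw [Finset.sum_congr rfl fun y _ => h y]
    rw [Finset.sum_sub_distrib, Finset.sum_add_distrib, Finset.sum_add_distrib,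
      ← Finset.mul_sum, ← Finset.mul_sum, ← Finset.mul_sum, ← Finset.mul_sum]
  have hexpmM : ∑ y, softmax M y * M y
      = (1-e) * (∑ y, softmax M y * A y) + e * (∑ y, softmax M y * S y)
        + η * (∑ y, softmax M y * matVec P (softmax A) y)
        - η * (∑ y, softmax M y * matVec P (softmax S) y) := by
    have h : ∀ y : Y, softmax M y * M y
        = (1-e) * (softmax M y * A y) + e * (softmax M y * S y)
          + η * (softmax M y * matVec P (softmax A) y)
          - η * (softmax M y * matVec P (softmax S) y) := by
      intro y; rw [hM y]; ring
    rw [Finset.sum_congr rfl fun y _ => h y]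
    rw [Finset.sum_sub_distrib, Finset.sum_add_distrib, Finset.sum_add_distrib,
      ← Finset.mul_sum, ← Finset.mul_sum, ← Finset.mul_sum, ← Finset.mul_sum]
  -- expand skew into atoms
  have hskew : (∑ y, softmax M y * matVec P (softmax M) y)
      - (∑ y, softmax M y * matVec P (softmax S) y)
      - (∑ y, softmax S y * matVec P (softmax M) y)
      + (∑ y, softmax S y * matVec P (softmax S) y) = 0 := by
    have h : ∀ y : Y, (softmax M y - softmax S y)
        * (matVec P (softmax M) y - matVec P (softmax S) y)
        = softmax M y * matVec P (softmax M) y - softmax M y * matVec P (softmax S) y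
          - softmax S y * matVec P (softmax M) y + softmax S y * matVec P (softmax S) y := by
      intro y; ring
    rw [Finset.sum_congr rfl fun y _ => h y] at hskew0
    rw [Finset.sum_add_distrib, Finset.sum_sub_distrib, Finset.sum_sub_distrib] at hskew0
    linarith only [hskew0]
  -- MASTER identity
  have master : KLdiv (softmax S) (softmax B)
      = (1-e) * KLdiv (softmax S) (softmax A)
        - (1-e) * KLdiv (softmax M) (softmax A)
        + KLdiv (softmax M) (softmax B)
        - e * KLdiv (softmax M) (softmax S) := by
    rw [KLF Y S B, KLF Y S A, KLF Y M A, KLF Y M B, KLF Y M S]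
    have expand : ∀ (p u v : Y → ℝ), (∑ z, p z * (u z - v z))
        = (∑ z, p z * u z) - (∑ z, p z * v z) := by
      intro p u v
      rw [← Finset.sum_sub_distrib]
      exact Finset.sum_congr rfl fun z _ => by ring
    rw [expand, expand, expand, expand, expand, hexpq, hexpmB, hexpmM]
    linear_combination η * hskew
  -- Part 2: the analytic inequality (G2)
  obtain ⟨w, hwdef⟩ : ∃ w : ℝ, ∑ y, |softmax M y - softmax A y| = w := ⟨_, rfl⟩
  obtain ⟨v, hvdef⟩ : ∃ v : ℝ, ∑ y, |softmax M y - softmax S y| = v := ⟨_, rfl⟩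
  obtain ⟨s, hsdef⟩ : ∃ s : ℝ, ∑ y, |softmax B y - softmax M y| = s := ⟨_, rfl⟩
  have hw0 : 0 ≤ w := hwdef ▸ Finset.sum_nonneg fun y _ => abs_nonneg _
  have hv0 : 0 ≤ v := hvdef ▸ Finset.sum_nonneg fun y _ => abs_nonneg _
  have hs0 : 0 ≤ s := hsdef ▸ Finset.sum_nonneg fun y _ => abs_nonneg _
  have hw2 : w ≤ 2 := by
    have h1 : ∀ y : Y, |softmax M y - softmax A y| ≤ softmax M y + softmax A y := by
      intro y
      have := abs_sub (softmax M y) (softmax A y)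
      calc |softmax M y - softmax A y| ≤ |softmax M y| + |softmax A y| := abs_sub _ _
        _ = softmax M y + softmax A y := by
            rw [abs_of_pos (hmpos y), abs_of_pos (hapos y)]
    rw [← hwdef]
    calc (∑ y, |softmax M y - softmax A y|) ≤ ∑ y, (softmax M y + softmax A y) :=
        Finset.sum_le_sum fun y _ => h1 y
      _ = 2 := by rw [Finset.sum_add_distrib, hm1, ha1]; norm_num
  obtain ⟨τ, hτdef⟩ : ∃ τ : ℝ, η * w = τ := ⟨_, rfl⟩
  have hτ0 : 0 ≤ τ := hτdef ▸ mul_nonneg (le_of_lt hη) hw0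
  have hτ23 : τ ≤ 2/3 := by
    rw [← hτdef]
    calc η * w ≤ (1/3) * 2 := mul_le_mul hη3 hw2 hw0 (by norm_num)
      _ = 2/3 := by norm_num
  have hlin2 : ∀ y : Y, (∑ y', P y y' * (softmax M y' - softmax A y'))
      = matVec P (softmax M) y - matVec P (softmax A) y := by
    intro y
    simp only [matVec, mul_sub, Finset.sum_sub_distrib]
  -- pointwise bound on B - M
  have hBM : ∀ y : Y, B y - M y
      = η * (∑ y', P y y' * (softmax M y' - softmax A y')) := by
    intro y
    rw [hB y, hM y, hlin2 y]
    ring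
  have hzsum2 : ∑ y, (softmax M y - softmax A y) = 0 := by
    rw [Finset.sum_sub_distrib, hm1, ha1]; ring
  have hdd : ∀ y : Y, |B y - M y| ≤ τ/2 := by
    intro y
    rw [hBM y, abs_mul, abs_of_pos hη]
    have := PZbound P hP0 hP1 (fun y' => softmax M y' - softmax A y') hzsum2 y
    rw [hwdef] at this
    calc η * |∑ y', P y y' * (softmax M y' - softmax A y')| ≤ η * (w / 2) :=
          mul_le_mul_of_nonneg_left this (le_of_lt hη)
      _ = τ/2 := by rw [← hτdef]; ring
  -- Pinsker instances
  have pins : ∀ (X X' : Y → ℝ),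
      (∑ y, |softmax X y - softmax X' y|)^2 ≤ (14/5) * KLdiv (softmax X) (softmax X') :=
    fun X X' => pinsker Y _ _ (softmax_pos Y X) (softmax_pos Y X')
      (softmax_sum Y X) (softmax_sum Y X')
  have hKnn : ∀ (X X' : Y → ℝ), 0 ≤ KLdiv (softmax X) (softmax X') := by
    intro X X'
    nlinarith only [pins X X', sq_nonneg (∑ y, |softmax X y - softmax X' y|)]
  -- K_bm + K_mb = ∑ (b-m)(B-M) ≤ s τ/2
  have hKsum : KLdiv (softmax B) (softmax M) + KLdiv (softmax M) (softmax B)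
      = ∑ y, (softmax B y - softmax M y) * (B y - M y) := by
    rw [KLF Y B M, KLF Y M B]
    have h1 : (∑ z, softmax B z * (B z - M z)) + (∑ z, softmax M z * (M z - B z))
        = ∑ y, (softmax B y - softmax M y) * (B y - M y) := by
      rw [← Finset.sum_add_distrib]
      exact Finset.sum_congr rfl fun y _ => by ring
    linarith only [h1, KLF Y B M, KLF Y M B]
  have hbmle : ∑ y, (softmax B y - softmax M y) * (B y - M y) ≤ s * (τ/2) := by
    calc ∑ y, (softmax B y - softmax M y) * (B y - M y)
        ≤ ∑ y, |softmax B y - softmax M y| * |B y - M y| := by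
          apply Finset.sum_le_sum
          intro y _
          rw [← abs_mul]
          exact le_abs_self _
      _ ≤ ∑ y, |softmax B y - softmax M y| * (τ/2) := by
          apply Finset.sum_le_sum
          intro y _
          exact mul_le_mul_of_nonneg_left (hdd y) (abs_nonneg _)
      _ = s * (τ/2) := by rw [← Finset.sum_mul, hsdef]
  have hKbmmb0 : KLdiv (softmax B) (softmax M) + KLdiv (softmax M) (softmax B) ≤ s * (τ/2) := by
    rw [hKsum]; exact hbmle
  have hsle : s ≤ (7/5) * τ := by
    have h1 : s^2 ≤ (14/5) * KLdiv (softmax B) (softmax M) := by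
      rw [← hsdef]; exact pins B M
    have h2 : s^2 ≤ (7/5) * (s * τ) := by
      nlinarith only [hKnn M B, hKbmmb0, h1]
    by_contra hcon
    push_neg at hcon
    nlinarith only [h2, hτ0, hs0, hcon]
  have hKbmmb : KLdiv (softmax B) (softmax M) + KLdiv (softmax M) (softmax B) ≤ (7/10) * τ^2 := by
    calc KLdiv (softmax B) (softmax M) + KLdiv (softmax M) (softmax B) ≤ s * (τ/2) := hKbmmb0
      _ ≤ ((7/5)*τ) * (τ/2) := mul_le_mul_of_nonneg_right hsle (by linarith)
      _ = (7/10)*τ^2 := by ring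
  -- ratio bound
  have habs : ∀ y : Y, |softmax B y - softmax M y| ≤ (Real.exp τ - 1) * softmax M y :=
    softmax_absdiff Y B M τ hτ0 hdd
  -- the X decomposition
  obtain ⟨X, hXdef⟩ : ∃ X : ℝ, ∑ y, (softmax B y - softmax M y)
      * (Real.log (softmax M y) - Real.log (softmax S y)) = X := ⟨_, rfl⟩
  have hlogdiv : ∀ (p r : Y → ℝ), KLdiv (softmax p) (softmax r)
      = ∑ y, softmax p y * (Real.log (softmax p y) - Real.log (softmax r y)) := by
    intro p r
    rw [KLdiv]
    exact Finset.sum_congr rfl fun y _ => by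
      rw [Real.log_div (ne_of_gt (softmax_pos Y p y)) (ne_of_gt (softmax_pos Y r y))]
  have hXdecomp : KLdiv (softmax B) (softmax S)
      = KLdiv (softmax B) (softmax M) + KLdiv (softmax M) (softmax S) + X := by
    rw [hlogdiv B S, hlogdiv B M, hlogdiv M S, ← hXdef]
    rw [← Finset.sum_add_distrib, ← Finset.sum_add_distrib]
    exact Finset.sum_congr rfl fun y _ => by ring
  -- bound on |X|
  have hmlog : ∀ y : Y, softmax M y * |Real.log (softmax M y) - Real.log (softmax S y)|
      ≤ softmax M y * (Real.log (softmax M y) - Real.log (softmax S y))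
        + 2 * |softmax S y - softmax M y| := by
    intro y
    rcases le_or_gt 0 (Real.log (softmax M y) - Real.log (softmax S y)) with h | h
    · rw [abs_of_nonneg h]
      have := abs_nonneg (softmax S y - softmax M y)
      linarith only [this, h]
    · rw [abs_of_neg h]
      have hlog2 : Real.log (softmax S y / softmax M y) ≤ softmax S y / softmax M y - 1 :=
        Real.log_le_sub_one_of_pos (div_pos (hqpos y) (hmpos y))
      rw [Real.log_div (ne_of_gt (hqpos y)) (ne_of_gt (hmpos y))] at hlog2
      have h3 : softmax M y * (Real.log (softmax S y) - Real.log (softmax M y))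
          ≤ softmax S y - softmax M y := by
        have h4 := mul_le_mul_of_nonneg_left hlog2 (le_of_lt (hmpos y))
        have h5 : softmax M y * (softmax S y / softmax M y - 1)
            = softmax S y - softmax M y := by
          have hne := ne_of_gt (hmpos y)
          field_simp
        linarith only [h4, h5.le, h5.ge]
      have h6 : softmax S y - softmax M y ≤ |softmax S y - softmax M y| := le_abs_self _
      nlinarith only [h3, h6, abs_nonneg (softmax S y - softmax M y), h]
  have hXbound : |X| ≤ (Real.exp τ - 1) * (KLdiv (softmax M) (softmax S) + 2 * v) := by
    have heτ0 : 0 ≤ Real.exp τ - 1 := by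
      have := Real.add_one_le_exp τ
      linarith only [this, hτ0]
    have h1 : |X| ≤ ∑ y, (Real.exp τ - 1)
        * (softmax M y * |Real.log (softmax M y) - Real.log (softmax S y)|) := by
      rw [← hXdef]
      calc |∑ y, (softmax B y - softmax M y)
            * (Real.log (softmax M y) - Real.log (softmax S y))|
          ≤ ∑ y, |(softmax B y - softmax M y)
            * (Real.log (softmax M y) - Real.log (softmax S y))| :=
            Finset.abs_sum_le_sum_abs _ _
        _ ≤ ∑ y, (Real.exp τ - 1)
            * (softmax M y * |Real.log (softmax M y) - Real.log (softmax S y)|) := by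
            apply Finset.sum_le_sum
            intro y _
            rw [abs_mul]
            have h2 := mul_le_mul_of_nonneg_right (habs y)
              (abs_nonneg (Real.log (softmax M y) - Real.log (softmax S y)))
            calc |softmax B y - softmax M y|
                  * |Real.log (softmax M y) - Real.log (softmax S y)|
                ≤ (Real.exp τ - 1) * softmax M y
                  * |Real.log (softmax M y) - Real.log (softmax S y)| := h2
              _ = (Real.exp τ - 1) * (softmax M y
                  * |Real.log (softmax M y) - Real.log (softmax S y)|) := by ring
    have h3 : ∑ y, softmax M y * |Real.log (softmax M y) - Real.log (softmax S y)|
        ≤ KLdiv (softmax M) (softmax S) + 2 * v := by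
      rw [hlogdiv M S, ← hvdef]
      calc ∑ y, softmax M y * |Real.log (softmax M y) - Real.log (softmax S y)|
          ≤ ∑ y, (softmax M y * (Real.log (softmax M y) - Real.log (softmax S y))
            + 2 * |softmax S y - softmax M y|) :=
            Finset.sum_le_sum fun y _ => hmlog y
        _ = (∑ y, softmax M y * (Real.log (softmax M y) - Real.log (softmax S y)))
            + 2 * ∑ y, |softmax S y - softmax M y| := by
            rw [Finset.sum_add_distrib, Finset.mul_sum]
        _ = (∑ y, softmax M y * (Real.log (softmax M y) - Real.log (softmax S y)))
            + 2 * ∑ y, |softmax M y - softmax S y| := by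
            have hcomm : (∑ y, |softmax S y - softmax M y|)
                = ∑ y, |softmax M y - softmax S y| :=
              Finset.sum_congr rfl fun y _ => abs_sub_comm _ _
            rw [hcomm]
    calc |X| ≤ ∑ y, (Real.exp τ - 1)
          * (softmax M y * |Real.log (softmax M y) - Real.log (softmax S y)|) := h1
      _ = (Real.exp τ - 1) * ∑ y, softmax M y
          * |Real.log (softmax M y) - Real.log (softmax S y)| := by rw [← Finset.mul_sum]
      _ ≤ (Real.exp τ - 1) * (KLdiv (softmax M) (softmax S) + 2 * v) :=
          mul_le_mul_of_nonneg_left h3 heτ0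
  -- final assembly
  have hKmq0 := hKnn M S
  have hKma0 := hKnn M A
  have hKbm0 := hKnn B M
  have hKmb0 := hKnn M B
  have hKbq0 := hKnn B S
  have heτ1 : Real.exp τ - 1 ≤ (143/100)*τ := by
    have := expChord τ hτ0 hτ23
    linarith only [this]
  have hKbq_le : KLdiv (softmax B) (softmax S)
      ≤ KLdiv (softmax B) (softmax M) + KLdiv (softmax M) (softmax S)
        + (143/100)*τ*(KLdiv (softmax M) (softmax S) + 2*v) := by
    have h1 : X ≤ |X| := le_abs_self X
    have h2 : (Real.exp τ - 1) * (KLdiv (softmax M) (softmax S) + 2*v)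
        ≤ (143/100)*τ*(KLdiv (softmax M) (softmax S) + 2*v) := by
      apply mul_le_mul_of_nonneg_right heτ1
      linarith only [hKmq0, hv0]
    linarith only [hXdecomp, hXbound, h1, h2, abs_nonneg X, le_abs_self X, neg_abs_le X]
  have hPw' : w^2 ≤ (14/5) * KLdiv (softmax M) (softmax A) := by
    have := pins M A
    rw [hwdef] at this
    exact this
  have hPv' : v^2 ≤ (14/5) * KLdiv (softmax M) (softmax S) := by
    have := pins M S
    rw [hvdef] at this
    exact this
  have hτ2η : τ ≤ 2*η := by
    rw [← hτdef]
    nlinarith only [hw2, hη, hw0]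
  have hA'pos : 0 < (5/14)*(1-e) - (7/10)*η^2 := by nlinarith only [hepos, he1, hη, hη3]
  have hB'pos : 0 ≤ (5/14)*(e*(1/2 - (143/100)*η)) := by nlinarith only [hepos, hη3]
  have hCpos : (0:ℝ) ≤ 1/2 - (143/100)*η := by linarith only [hη3]
  have hq1' : η*(15/14 - (7/10)*η) ≤ (5/14)*(1-e) - (7/10)*η^2 := by nlinarith only [he1]
  have hkey : (1-3*η)*((143/100)^2*η)
      ≤ (10/7)*(1/2-(143/100)*η)*(15/14 - (7/10)*η) := by
    nlinarith only [hη, hη3, sq_nonneg η, sq_nonneg (η - 1/3), mul_pos hη hη]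
  have hmain : e*((143/100)^2*η^2)
      ≤ (10/7)*(1/2-(143/100)*η)*((5/14)*(1-e) - (7/10)*η^2) := by
    calc e*((143/100)^2*η^2) ≤ (1-3*η)*((143/100)^2*η^2) := by nlinarith only [sq_nonneg η, he1]
      _ = ((1-3*η)*((143/100)^2*η))*η := by ring
      _ ≤ ((10/7)*(1/2-(143/100)*η)*(15/14 - (7/10)*η))*η :=
          mul_le_mul_of_nonneg_right hkey (le_of_lt hη)
      _ = ((10/7)*(1/2-(143/100)*η))*(η*(15/14 - (7/10)*η)) := by ring
      _ ≤ ((10/7)*(1/2-(143/100)*η))*((5/14)*(1-e) - (7/10)*η^2) := by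
          apply mul_le_mul_of_nonneg_left hq1'
          linarith only [hCpos]
  have hFP : (e*(143/100)*η)^2
      ≤ 4*((5/14)*(1-e) - (7/10)*η^2)*((5/14)*(e*(1/2 - (143/100)*η))) := by
    calc (e*(143/100)*η)^2 = e*(e*((143/100)^2*η^2)) := by ring
      _ ≤ e*((10/7)*(1/2-(143/100)*η)*((5/14)*(1-e) - (7/10)*η^2)) :=
          mul_le_mul_of_nonneg_left hmain (le_of_lt hepos)
      _ = 4*((5/14)*(1-e) - (7/10)*η^2)*((5/14)*(e*(1/2 - (143/100)*η))) := by ring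
  have hquad : e*(143/100)*η*(w*v)
      ≤ ((5/14)*(1-e) - (7/10)*η^2)*w^2 + ((5/14)*(e*(1/2 - (143/100)*η)))*v^2 := by
    nlinarith only [sq_nonneg (2*((5/14)*(1-e) - (7/10)*η^2)*w - e*(143/100)*η*v),
      hFP, hA'pos, sq_nonneg v, hw0, hv0]
  -- (G2)
  have hG2 : KLdiv (softmax M) (softmax B) + (e/2) * KLdiv (softmax B) (softmax S)
      ≤ (1-e)*KLdiv (softmax M) (softmax A) + e*KLdiv (softmax M) (softmax S) := by
    have hKmb_le : KLdiv (softmax M) (softmax B) + (e/2) * KLdiv (softmax B) (softmax M)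
        ≤ (7/10)*τ^2 := by
      nlinarith only [hKbmmb, hKbm0, hepos, he1, hη]
    have step1 := mul_le_mul_of_nonneg_left hKbq_le (by linarith only [hepos] : (0:ℝ) ≤ e/2)
    have step1' : e/2 * (KLdiv (softmax B) (softmax M) + KLdiv (softmax M) (softmax S)
          + (143/100)*τ*(KLdiv (softmax M) (softmax S) + 2*v))
        = e/2 * KLdiv (softmax B) (softmax M) + e/2 * KLdiv (softmax M) (softmax S)
          + (e/2)*(143/100)*τ*KLdiv (softmax M) (softmax S) + e*(143/100)*τ*v := by
      ring
    have step2 : (e/2)*(143/100)*τ*KLdiv (softmax M) (softmax S)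
        ≤ e*(143/100)*η*KLdiv (softmax M) (softmax S) := by
      nlinarith only [mul_nonneg (mul_nonneg (le_of_lt hepos) hKmq0)
        (by linarith only [hτ2η] : (0:ℝ) ≤ 2*η - τ)]
    have step4 : e*(143/100)*τ*v = e*(143/100)*η*(w*v) := by rw [← hτdef]; ring
    have hττ : τ^2 = η^2*w^2 := by rw [← hτdef]; ring
    have step5 : (1-e)*((5/14)*w^2) ≤ (1-e)*KLdiv (softmax M) (softmax A) := by
      apply mul_le_mul_of_nonneg_left _ (by linarith only [he1, hη] : (0:ℝ) ≤ 1-e)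
      linarith only [hPw']
    have step6 : (e*(1/2 - (143/100)*η))*((5/14)*v^2)
        ≤ (e*(1/2 - (143/100)*η))*KLdiv (softmax M) (softmax S) := by
      apply mul_le_mul_of_nonneg_left _ (by nlinarith only [hepos, hη3])
      linarith only [hPv']
    linarith only [hKmb_le, step1, step1', step2, step4, hττ, step5, step6, hquad]
  linarith only [master, hG2]

end Step


/- ## Main theorem -/

/-- under exact EGPO updates with `0 < η ≤ 1/(β+3)`, for every `T ≥ 1`,
`KL(π^{(T)} ‖ π*_β) ≤ (2/(ηβ)) · KL(π*_β ‖ π^{(0)}) · (1 − ηβ)^T`. -/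
theorem egpo_exact_linear_convergence_reverse_kl
    {Y : Type*} [Fintype Y] (hY : 2 ≤ Fintype.card Y)
    (P : Y → Y → ℝ)
    (hP0 : ∀ y y', 0 ≤ P y y') (hP1 : ∀ y y', P y y' ≤ 1)
    (hPsum : ∀ y y', P y y' + P y' y = 1)
    (β : ℝ) (hβ : 0 < β)
    (θref : Y → ℝ)
    (θstar : Y → ℝ)
    (hstar : θstar = fun y => θref y + matVec P (softmax θstar) y / β)
    (η : ℝ) (hη : 0 < η) (hη' : η ≤ 1 / (β + 3))
    (θ θhalf : ℕ → Y → ℝ)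
    (hhalf : ∀ t, θhalf t = fun y =>
      (1 - η * β) * θ t y + η * β * (θref y + matVec P (softmax (θ t)) y / β))
    (hstep : ∀ t, θ (t + 1) = fun y =>
      (1 - η * β) * θ t y + η * β * (θref y + matVec P (softmax (θhalf t)) y / β))
    (T : ℕ) (hT : 1 ≤ T) :
    KLdiv (softmax (θ T)) (softmax θstar)
      ≤ 2 / (η * β) * KLdiv (softmax θstar) (softmax (θ 0)) * (1 - η * β) ^ T := by
  have hNE : Nonempty Y := Fintype.card_pos_iff.mp (by omega)
  have hβ3 : (0:ℝ) < β + 3 := by linarith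
  have hη3 : η ≤ 1/3 := by
    have h1 : 1/(β+3) ≤ 1/3 := by
      apply one_div_le_one_div_of_le (by norm_num)
      linarith
    linarith [hη', h1]
  have hηβ : η * β ≤ 1 - 3*η := by
    have h1 : η * (β+3) ≤ 1 := by
      have h2 := mul_le_mul_of_nonneg_right hη' (le_of_lt hβ3)
      rw [one_div, inv_mul_cancel₀ (ne_of_gt hβ3)] at h2
      exact h2
    nlinarith [h1]
  have hθref : ∀ y, θref y = θstar y - matVec P (softmax θstar) y / β := by
    intro y
    have := congrFun hstar y
    linarith [this]
  -- one-step inequality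
  have hstepKL : ∀ t : ℕ,
      KLdiv (softmax θstar) (softmax (θ (t+1)))
        + (η*β/2) * KLdiv (softmax (θ (t+1))) (softmax θstar)
      ≤ (1 - η*β) * KLdiv (softmax θstar) (softmax (θ t)) := by
    intro t
    apply egpo_step P hP0 hP1 hPsum β η hβ hη hη3 hηβ θstar (θ t) (θhalf t) (θ (t+1))
    · intro y
      have h := congrFun (hhalf t) y
      rw [h, hθref y]
      field_simp
      ring
    · intro y
      have h := congrFun (hstep t) y
      rw [h, hθref y]
      field_simp
      ring
  -- KL nonnegativity between softmaxes
  have hKnn : ∀ (X X' : Y → ℝ), 0 ≤ KLdiv (softmax X) (softmax X') := by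
    intro X X'
    nlinarith only [pinsker Y (softmax X) (softmax X') (softmax_pos Y X) (softmax_pos Y X')
      (softmax_sum Y X) (softmax_sum Y X'),
      sq_nonneg (∑ y, |softmax X y - softmax X' y|)]
  have hepos : 0 < η * β := mul_pos hη hβ
  have h1e : (0:ℝ) ≤ 1 - η*β := by linarith [hηβ, hη]
  -- geometric decay of forward KL
  have hD : ∀ t : ℕ, KLdiv (softmax θstar) (softmax (θ t))
      ≤ (1 - η*β)^t * KLdiv (softmax θstar) (softmax (θ 0)) := by
    intro t
    induction t with
    | zero => simp
    | succ n ih =>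
      have hc : KLdiv (softmax θstar) (softmax (θ (n+1)))
          ≤ (1 - η*β) * KLdiv (softmax θstar) (softmax (θ n)) := by
        have h1 := hstepKL n
        have h2 : 0 ≤ (η*β/2) * KLdiv (softmax (θ (n+1))) (softmax θstar) :=
          mul_nonneg (by linarith [hepos]) (hKnn _ _)
        linarith only [h1, h2]
      calc KLdiv (softmax θstar) (softmax (θ (n+1)))
          ≤ (1 - η*β) * KLdiv (softmax θstar) (softmax (θ n)) := hc
        _ ≤ (1 - η*β) * ((1 - η*β)^n * KLdiv (softmax θstar) (softmax (θ 0))) :=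
            mul_le_mul_of_nonneg_left ih h1e
        _ = (1 - η*β)^(n+1) * KLdiv (softmax θstar) (softmax (θ 0)) := by
            rw [pow_succ]; ring
  -- final step
  obtain ⟨T', rfl⟩ : ∃ T', T = T' + 1 := ⟨T - 1, by omega⟩
  have hfin := hstepKL T'
  have hDT1 : 0 ≤ KLdiv (softmax θstar) (softmax (θ (T'+1))) := hKnn _ _
  have key : (η*β/2) * KLdiv (softmax (θ (T'+1))) (softmax θstar)
      ≤ (1 - η*β)^(T'+1) * KLdiv (softmax θstar) (softmax (θ 0)) := by
    calc (η*β/2) * KLdiv (softmax (θ (T'+1))) (softmax θstar)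
        ≤ (1 - η*β) * KLdiv (softmax θstar) (softmax (θ T')) := by
          linarith only [hfin, hDT1]
      _ ≤ (1 - η*β) * ((1 - η*β)^T' * KLdiv (softmax θstar) (softmax (θ 0))) :=
          mul_le_mul_of_nonneg_left (hD T') h1e
      _ = (1 - η*β)^(T'+1) * KLdiv (softmax θstar) (softmax (θ 0)) := by
          rw [pow_succ]; ring
  have hmul := mul_le_mul_of_nonneg_left key
    (le_of_lt (show (0:ℝ) < 2/(η*β) by positivity))
  have hl : 2/(η*β) * ((η*β/2) * KLdiv (softmax (θ (T'+1))) (softmax θstar))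
      = KLdiv (softmax (θ (T'+1))) (softmax θstar) := by
    have hne : η*β ≠ 0 := ne_of_gt hepos
    field_simp
  have hr : 2/(η*β) * ((1 - η*β)^(T'+1) * KLdiv (softmax θstar) (softmax (θ 0)))
      = 2/(η*β) * KLdiv (softmax θstar) (softmax (θ 0)) * (1 - η*β)^(T'+1) := by
    ring
  rw [hl, hr] at hmul
  exact hmul
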